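/- Let F be a field with a valuation v, and let K ⊆ K' and K ⊆ L be subfields of F. Assume that the extension L/K is vs-defectless, that Γ(L) ∩ Γ(K') = Γ(K), and that the residue field k(L) is linearly disjoint from k(K') over k(K) inside the residue field of F. Let LK' denote the subfield of F generated by L ∪ K'. Then the extension LK'/K' is vs-defectless. -/

import Mathlib

open scoped Pointwise

/-- Linear independence of a finite family over a subset `E` of a commutative ring: no
nontrivial linear combination with coefficients in `E` vanishes. -/
def LinIndepOver {R : Type*} [CommRing R] (E : Set R) {n : ℕ} (b : Fin n → R) : Prop :=
  ∀ c : Fin n → R, (∀ i, c i ∈ E) → (∑ i, c i * b i) = 0 → ∀ i, c i = 0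

variable {F Γ₀ : Type*} [Field F] [LinearOrderedCommGroupWithZero Γ₀]

/-- A finite family `b` of elements of `F` is `E`-valuation independent:
`v(∑ cᵢ bᵢ) = minᵢ v(cᵢ bᵢ)` for all coefficients `cᵢ ∈ E`.  (In Mathlib's multiplicative
convention for valuations, the additive `min` becomes the multiplicative `sup`, and the additive
`∞` becomes `0`.) -/
def ValIndep (v : Valuation F Γ₀) (E : Set F) {n : ℕ} (b : Fin n → F) : Prop :=
  letI : OrderBot Γ₀ := { bot := 0, bot_le := fun _ => zero_le' }
  ∀ c : Fin n → F, (∀ i, c i ∈ E) →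
    v (∑ i, c i * b i) = Finset.univ.sup fun i => v (c i * b i)

/-- The `E`-linear span (inside `F`) of a subset `s ⊆ F`, for `E ⊆ F`. -/
def SpanOver (E s : Set F) : Set F :=
  {y | ∃ (n : ℕ) (c t : Fin n → F),
    (∀ i, c i ∈ E) ∧ (∀ i, t i ∈ s) ∧ y = ∑ i, c i * t i}

/-- The extension `L/E` is vs-defectless: every finite-dimensional `E`-vector subspace of `L`
admits an `E`-basis which is `E`-valuation independent. -/
def VsDefectless (v : Valuation F Γ₀) (E L : Set F) : Prop :=
  ∀ (n : ℕ) (x : Fin n → F), (∀ i, x i ∈ L) →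
    ∃ (m : ℕ) (b : Fin m → F),
      ValIndep v E b ∧ LinIndepOver E b ∧
        SpanOver E (Set.range b) = SpanOver E (Set.range x)

/-- The value group `Γ(E) = v(E∖{0})` of a subset `E ⊆ F`, as a subset of `Γ₀`. -/
def ValueGroupSet (v : Valuation F Γ₀) (E : Set F) : Set Γ₀ :=
  v '' (E \ {0})

/-- The residue field `k_F = O_F/m_F` of the valued field `(F, v)`. -/
abbrev ResField (v : Valuation F Γ₀) : Type _ :=
  IsLocalRing.ResidueField v.valuationSubring

/-- The image `k(E) = res(O_E)` of a subset `E ⊆ F` in the residue field of `(F, v)`. -/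
def ResidueSet (v : Valuation F Γ₀) (E : Set F) : Set (ResField v) :=
  {y | ∃ x : v.valuationSubring, (x : F) ∈ E ∧ IsLocalRing.residue _ x = y}

namespace Aux13

/-- `Finset.univ.sup` with the `⊥ = 0` order-bot instance. -/
def VSup {n : ℕ} (f : Fin n → Γ₀) : Γ₀ :=
  letI : OrderBot Γ₀ := { bot := 0, bot_le := fun _ => zero_le' }
  Finset.univ.sup f

lemma valIndep_iff (v : Valuation F Γ₀) (E : Set F) {n : ℕ} (b : Fin n → F) :
    ValIndep v E b ↔ ∀ c : Fin n → F, (∀ i, c i ∈ E) →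
      v (∑ i, c i * b i) = VSup (fun i => v (c i * b i)) := Iff.rfl

lemma le_vsup {n : ℕ} (f : Fin n → Γ₀) (i : Fin n) : f i ≤ VSup f := by
  letI : OrderBot Γ₀ := { bot := 0, bot_le := fun _ => zero_le' }
  exact Finset.le_sup (Finset.mem_univ i)

lemma vsup_le {n : ℕ} {f : Fin n → Γ₀} {g : Γ₀} (h : ∀ i, f i ≤ g) : VSup f ≤ g := by
  letI : OrderBot Γ₀ := { bot := 0, bot_le := fun _ => zero_le' }
  exact Finset.sup_le fun i _ => h i

lemma exists_vsup {n : ℕ} (hn : n ≠ 0) (f : Fin n → Γ₀) : ∃ i, VSup f = f i := by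
  letI : OrderBot Γ₀ := { bot := 0, bot_le := fun _ => zero_le' }
  obtain ⟨i, -, hi⟩ := Finset.exists_mem_eq_sup Finset.univ
    (Finset.univ_nonempty_iff.2 ⟨⟨0, Nat.pos_of_ne_zero hn⟩⟩) f
  exact ⟨i, hi⟩

lemma vsup_fin_zero (f : Fin 0 → Γ₀) : VSup f = 0 := by
  letI : OrderBot Γ₀ := { bot := 0, bot_le := fun _ => zero_le' }
  show Finset.univ.sup f = 0
  simp [Finset.univ_eq_empty]
  rfl

lemma vsup_eq_zero_iff {n : ℕ} {f : Fin n → Γ₀} : VSup f = 0 ↔ ∀ i, f i = 0 := by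
  constructor
  · intro h i
    exact le_zero_iff.1 (h ▸ le_vsup f i)
  · intro h
    refine le_antisymm (vsup_le fun i => (h i).le) zero_le'

lemma vsup_mul {n : ℕ} (f : Fin n → Γ₀) (t : Γ₀) :
    VSup (fun i => f i * t) = VSup f * t := by
  rcases eq_or_ne t 0 with rfl | ht
  · simp only [mul_zero]
    exact vsup_eq_zero_iff.2 fun _ => rfl
  · refine le_antisymm (vsup_le fun i => mul_le_mul_left (le_vsup f i) t) ?_
    have : VSup f ≤ VSup (fun i => f i * t) * t⁻¹ := by
      refine vsup_le fun i => ?_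
      rw [le_mul_inv_iff₀ (zero_lt_iff.2 ht)]
      exact le_vsup (fun i => f i * t) i
    calc VSup f * t ≤ VSup (fun i => f i * t) * t⁻¹ * t := mul_le_mul_left this t
      _ = VSup (fun i => f i * t) := by
          rw [mul_assoc, inv_mul_cancel₀ ht, mul_one]

lemma vsup_succAbove {n : ℕ} (f : Fin (n + 1) → Γ₀) (i₁ : Fin (n + 1)) :
    VSup f = f i₁ ⊔ VSup (fun j => f (i₁.succAbove j)) := by
  refine le_antisymm (vsup_le fun i => ?_) (sup_le (le_vsup f i₁) (vsup_le fun j => le_vsup f _))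
  rcases eq_or_ne i i₁ with rfl | h
  · exact le_sup_left
  · obtain ⟨j, rfl⟩ := Fin.exists_succAbove_eq h
    exact le_trans (le_vsup (fun j => f (i₁.succAbove j)) j) le_sup_right

lemma vsup_cons {n : ℕ} (f : Fin (n + 1) → Γ₀) :
    VSup f = f 0 ⊔ VSup (fun j => f j.succ) := by
  simpa [Fin.succAbove_zero] using vsup_succAbove f 0

end Aux13


namespace Aux13

lemma zero_mem_spanOver (E s : Set F) : (0:F) ∈ SpanOver E s :=
  ⟨0, Fin.elim0, Fin.elim0, fun i => i.elim0, fun i => i.elim0, by simp⟩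

lemma mem_spanOver_of_mem {E : Set F} (h1 : (1:F) ∈ E) {s : Set F} {y : F} (hy : y ∈ s) :
    y ∈ SpanOver E s :=
  ⟨1, fun _ => 1, fun _ => y, fun _ => h1, fun _ => hy, by simp⟩

lemma spanOver_mono {E s t : Set F} (h : s ⊆ t) : SpanOver E s ⊆ SpanOver E t := by
  rintro y ⟨n, c, u, hc, hu, rfl⟩
  exact ⟨n, c, u, hc, fun i => h (hu i), rfl⟩

lemma smul_mem_spanOver (E : Subfield F) {s : Set F} {c y : F} (hc : c ∈ E)
    (hy : y ∈ SpanOver (E : Set F) s) : c * y ∈ SpanOver (E : Set F) s := by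
  obtain ⟨n, cc, tt, hcc, htt, rfl⟩ := hy
  refine ⟨n, fun i => c * cc i, tt, fun i => E.mul_mem hc (hcc i), htt, ?_⟩
  rw [Finset.mul_sum]
  exact Finset.sum_congr rfl fun i _ => (mul_assoc _ _ _).symm

lemma add_mem_spanOver {E : Set F} {s : Set F} {x y : F}
    (hx : x ∈ SpanOver E s) (hy : y ∈ SpanOver E s) : x + y ∈ SpanOver E s := by
  obtain ⟨n, c, t, hc, ht, rfl⟩ := hx
  obtain ⟨m, d, u, hd, hu, rfl⟩ := hy
  refine ⟨n + m, Fin.append c d, Fin.append t u, ?_, ?_, ?_⟩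
  · intro i
    refine Fin.addCases (fun j => ?_) (fun j => ?_) i
    · rw [Fin.append_left]; exact hc j
    · rw [Fin.append_right]; exact hd j
  · intro i
    refine Fin.addCases (fun j => ?_) (fun j => ?_) i
    · rw [Fin.append_left]; exact ht j
    · rw [Fin.append_right]; exact hu j
  · rw [Fin.sum_univ_add]
    congr 1
    · exact Finset.sum_congr rfl fun i _ => by rw [Fin.append_left, Fin.append_left]
    · exact Finset.sum_congr rfl fun i _ => by rw [Fin.append_right, Fin.append_right]

end Aux13


namespace Aux13

lemma sum_mem_spanOver (E : Subfield F) {s : Set F} :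
    ∀ {n : ℕ} {c t : Fin n → F}, (∀ i, c i ∈ E) →
      (∀ i, t i ∈ SpanOver (E : Set F) s) → (∑ i, c i * t i) ∈ SpanOver (E : Set F) s := by
  intro n
  induction n with
  | zero => intro c t _ _; simpa using zero_mem_spanOver (E : Set F) s
  | succ m ih =>
    intro c t hc ht
    rw [Fin.sum_univ_succ]
    exact add_mem_spanOver (smul_mem_spanOver E (hc 0) (ht 0))
      (ih (fun i => hc i.succ) (fun i => ht i.succ))

lemma spanOver_le (E : Subfield F) {s s' : Set F} (h : s' ⊆ SpanOver (E : Set F) s) :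
    SpanOver (E : Set F) s' ⊆ SpanOver (E : Set F) s := by
  rintro y ⟨n, c, t, hc, ht, rfl⟩
  exact sum_mem_spanOver E hc fun i => h (ht i)

/-- Canonical-form membership in the span of a finite family. -/
lemma mem_spanOver_range_iff (E : Subfield F) {m : ℕ} (b : Fin m → F) (y : F) :
    y ∈ SpanOver (E : Set F) (Set.range b) ↔
      ∃ C : Fin m → F, (∀ i, C i ∈ E) ∧ y = ∑ i, C i * b i := by
  constructor
  · rintro ⟨n, c, t, hc, ht, rfl⟩
    choose f hf using fun j => Set.mem_range.1 (ht j)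
    classical
    refine ⟨fun i => ∑ j ∈ Finset.univ.filter (fun j => f j = i), c j,
      fun i => Subfield.sum_mem E fun j _ => hc j, ?_⟩
    rw [← Finset.sum_fiberwise Finset.univ f (fun j => c j * t j)]
    refine Finset.sum_congr rfl fun i _ => ?_
    rw [Finset.sum_mul]
    refine Finset.sum_congr rfl fun j hj => ?_
    rw [Finset.mem_filter] at hj
    rw [← hf j, hj.2]
  · rintro ⟨C, hC, rfl⟩
    exact ⟨m, C, b, hC, fun i => Set.mem_range_self i, rfl⟩

end Aux13


namespace Aux13

lemma valIndep_fin_zero (v : Valuation F Γ₀) (E : Set F) (b : Fin 0 → F) : ValIndep v E b := by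
  rw [valIndep_iff]
  intro c hc
  rw [vsup_fin_zero]
  simp

lemma ValIndep.linIndepOver {v : Valuation F Γ₀} {E : Set F} {n : ℕ} {b : Fin n → F}
    (h : ValIndep v E b) (hb : ∀ i, b i ≠ 0) : LinIndepOver E b := by
  intro c hc hsum i
  have h2 := (valIndep_iff v E b).1 h c hc
  rw [hsum, map_zero] at h2
  have h0 : v (c i * b i) = 0 := vsup_eq_zero_iff.1 h2.symm i
  rcases mul_eq_zero.1 ((Valuation.zero_iff v).1 h0) with h' | h'
  · exact h'
  · exact absurd h' (hb i)

lemma LinIndepOver.ne_zero {E : Subfield F} {n : ℕ} {b : Fin n → F}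
    (h : LinIndepOver (E : Set F) b) (i : Fin n) : b i ≠ 0 := by
  classical
  intro hbi
  have hs : ∑ j, (if j = i then (1:F) else 0) * b j = 0 := by
    rw [Finset.sum_eq_single i (fun j _ hj => by simp [hj]) (fun h => absurd (Finset.mem_univ i) h)]
    simp [hbi]
  have := h (fun j => if j = i then (1:F) else 0)
    (fun j => by by_cases hj : j = i <;> simp [hj, E.one_mem, E.zero_mem]) hs i
  simp at this

lemma valIndep_cons {v : Valuation F Γ₀} (E : Subfield F) {k : ℕ} {b' : Fin k → F} {u : F}
    (hb' : ValIndep v (E : Set F) b')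
    (H : ∀ c : F, c ∈ E → ∀ w ∈ SpanOver (E : Set F) (Set.range b'),
      v c * v u ≤ v (c * u + w)) :
    ValIndep v (E : Set F) (Fin.cons (α := fun _ => F) u b') := by
  rw [valIndep_iff]; intro c hc
  set w := ∑ i : Fin k, c i.succ * b' i with hw
  have hcsum : ∑ i : Fin (k+1), c i * Fin.cons (α := fun _ => F) u b' i = c 0 * u + w := by
    rw [Fin.sum_univ_succ]; simp [hw]
  have hvw : v w = VSup (fun i : Fin k => v (c i.succ * b' i)) :=
    (valIndep_iff v _ b').1 hb' _ (fun i => hc i.succ)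
  have hterm : VSup (fun i : Fin (k+1) => v (c i * Fin.cons (α := fun _ => F) u b' i)) = v (c 0 * u) ⊔ v w := by
    rw [vsup_cons]; simp only [Fin.cons_zero, Fin.cons_succ]; rw [hvw]
  rw [hcsum, hterm]
  have hmem : w ∈ SpanOver (E : Set F) (Set.range b') :=
    ⟨k, fun i => c i.succ, b', fun i => hc i.succ, fun i => Set.mem_range_self i, rfl⟩
  rcases le_or_gt (v w) (v (c 0 * u)) with hle | hlt
  · have h1 : v (c 0 * u + w) ≤ v (c 0 * u) := le_trans (v.map_add _ _) (max_le le_rfl hle)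
    have h2 : v (c 0 * u) ≤ v (c 0 * u + w) := by
      rw [map_mul]; exact H (c 0) (hc 0) w hmem
    rw [sup_eq_left.2 hle]; exact le_antisymm h1 h2
  · rw [sup_eq_right.2 hlt.le]
    exact v.map_add_eq_of_lt_right hlt

lemma ValIndep.scale {v : Valuation F Γ₀} {E : Set F} {n : ℕ} {b : Fin n → F}
    (h : ValIndep v E b) (t : F) : ValIndep v E (fun i => b i * t) := by
  rw [valIndep_iff]; intro c hc
  have hsum : ∑ i, c i * (b i * t) = (∑ i, c i * b i) * t := by
    rw [Finset.sum_mul]; exact Finset.sum_congr rfl fun i _ => (mul_assoc _ _ _).symm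
  have hterm : (fun i => v (c i * (b i * t))) = fun i => v (c i * b i) * v t := by
    funext i; rw [← map_mul, ← mul_assoc]
  rw [hsum, map_mul, (valIndep_iff v E b).1 h c hc, hterm, vsup_mul]

end Aux13


namespace Aux13

lemma isUnit_iff_val {v : Valuation F Γ₀} (x : v.valuationSubring) :
    IsUnit x ↔ v (x : F) = 1 := by
  constructor
  · intro hx
    obtain ⟨y, hy⟩ := hx.exists_right_inv
    have h1 : (x : F) * (y : F) = 1 := by
      have := congrArg (fun z : v.valuationSubring => (z : F)) hy
      simpa using this
    have h2 : v (x : F) * v (y : F) = 1 := by rw [← map_mul, h1, map_one]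
    rcases lt_or_eq_of_le (x.2 : v (x : F) ≤ 1) with hlt | heq
    · exfalso
      have : v (x : F) * v (y : F) ≤ v (x : F) * 1 := mul_le_mul_right (y.2 : v (y : F) ≤ 1) _
      rw [h2, mul_one] at this
      exact absurd (lt_of_le_of_lt this hlt) (lt_irrefl 1)
    · exact heq
  · intro hx
    have hx0 : (x : F) ≠ 0 := by
      intro h; rw [h, map_zero] at hx; exact zero_ne_one hx
    refine IsUnit.of_mul_eq_one (a := x) ⟨(x : F)⁻¹, ?_⟩ ?_
    · rw [Valuation.mem_valuationSubring_iff, map_inv₀, hx, inv_one]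
    · exact Subtype.ext (by simp [mul_inv_cancel₀ hx0])

lemma residue_eq_zero_iff_val {v : Valuation F Γ₀} (x : v.valuationSubring) :
    IsLocalRing.residue _ x = 0 ↔ v (x : F) < 1 := by
  rw [IsLocalRing.residue_eq_zero_iff, IsLocalRing.mem_maximalIdeal, mem_nonunits_iff,
    isUnit_iff_val]
  exact ⟨fun h => lt_of_le_of_ne (x.2 : v (x : F) ≤ 1) h, fun h => ne_of_lt h⟩

lemma lt_one_of_mul_lt {γ x : Γ₀} (hγ : γ ≠ 0) (h : γ * x < γ) : x < 1 :=
  (mul_lt_mul_iff_right₀ (a := γ) (zero_lt_iff.2 hγ)).1 (by rwa [mul_one])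

lemma one_le_of_le_mul {γ x : Γ₀} (hγ : γ ≠ 0) (h : γ ≤ x * γ) : 1 ≤ x := by
  by_contra h'
  push_neg at h'
  have : x * γ < 1 * γ := (mul_lt_mul_iff_left₀ (zero_lt_iff.2 hγ)).2 h'
  rw [one_mul] at this
  exact absurd (lt_of_le_of_lt h this) (lt_irrefl γ)

end Aux13


namespace Aux13

lemma transfer (v : Valuation F Γ₀) (K K' L : Subfield F) (hKK' : K ≤ K') (hKL : K ≤ L)
    (hΓ : ValueGroupSet v (L : Set F) ∩ ValueGroupSet v (K' : Set F)
        = ValueGroupSet v (K : Set F))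
    (hres : ∀ (n : ℕ) (x : Fin n → ResField v),
        (∀ i, x i ∈ ResidueSet v (L : Set F)) →
        LinIndepOver (ResidueSet v (K : Set F)) x →
        LinIndepOver (ResidueSet v (K' : Set F)) x)
    {m : ℕ} {b : Fin m → F} (hbL : ∀ i, b i ∈ L) (hb : ValIndep v (K : Set F) b) :
    ValIndep v (K' : Set F) b := by
  classical
  rw [valIndep_iff]
  intro c hc
  set γ := VSup (fun i => v (c i * b i)) with hγdef
  have hle : v (∑ i, c i * b i) ≤ γ :=
    v.map_sum_le fun i _ => (le_vsup (fun i => v (c i * b i)) i).trans_eq hγdef.symm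
  rcases eq_or_ne γ 0 with h0 | hγ0
  · have hz : ∀ i, c i * b i = 0 := fun i =>
      (Valuation.zero_iff v).1 (le_zero_iff.1
        ((le_vsup (fun i => v (c i * b i)) i).trans_eq (hγdef.symm.trans h0)))
    rw [h0, Finset.sum_eq_zero fun i _ => hz i, map_zero]
  · refine le_antisymm hle ?_
    by_contra hlt'
    push_neg at hlt'
    set S : Finset (Fin m) := Finset.univ.filter (fun i => v (c i * b i) = γ) with hSdef
    have hm : m ≠ 0 := by
      rintro rfl
      exact hγ0 (hγdef.trans (vsup_fin_zero _))
    obtain ⟨i₀, hi₀⟩ := exists_vsup hm (fun i => v (c i * b i))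
    have hi₀S : i₀ ∈ S := by
      rw [hSdef, Finset.mem_filter]
      exact ⟨Finset.mem_univ _, (hγdef.trans hi₀).symm⟩
    have hmemS : ∀ i ∈ S, v (c i * b i) = γ := by
      intro i hi; rw [hSdef, Finset.mem_filter] at hi; exact hi.2
    have hbc0 : ∀ i ∈ S, b i ≠ 0 ∧ c i ≠ 0 := by
      intro i hi
      have h1 : c i * b i ≠ 0 := by
        intro h
        exact hγ0 (by rw [← hmemS i hi, h, map_zero])
      exact ⟨right_ne_zero_of_mul h1, left_ne_zero_of_mul h1⟩
    have hbi₀ : b i₀ ≠ 0 := (hbc0 i₀ hi₀S).1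
    have hci₀ : c i₀ ≠ 0 := (hbc0 i₀ hi₀S).2
    have hvbi₀ : v (b i₀) ≠ 0 := by simpa [Valuation.zero_iff] using hbi₀
    -- choose elements of K realizing the value ratios
    have hex : ∀ i, ∃ kk : F, kk ∈ K ∧ kk ≠ 0 ∧
        (i ∈ S → v kk = v (b i) / v (b i₀)) := by
      intro i
      by_cases hi : i ∈ S
      · have hbi : b i ≠ 0 := (hbc0 i hi).1
        have hci : c i ≠ 0 := (hbc0 i hi).2
        have hvci : v (c i) ≠ 0 := by simpa [Valuation.zero_iff] using hci
        have hvmem : v (b i / b i₀) ∈ ValueGroupSet v (K : Set F) := by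
          rw [← hΓ]
          refine ⟨⟨b i / b i₀, ⟨L.div_mem (hbL i) (hbL i₀), ?_⟩, rfl⟩,
            ⟨c i₀ / c i, ⟨K'.div_mem (hc i₀) (hc i), ?_⟩, ?_⟩⟩
          · simp [div_ne_zero hbi hbi₀]
          · simp [div_ne_zero hci₀ hci]
          · rw [v.map_div, v.map_div]
            have h1 : v (c i) * v (b i) = v (c i₀) * v (b i₀) := by
              rw [← map_mul, ← map_mul, hmemS i hi, hmemS i₀ hi₀S]
            rw [div_eq_div_iff hvci hvbi₀]
            exact h1.symm.trans (mul_comm _ _)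
        obtain ⟨kk, ⟨hkkK, hkk0⟩, hkkv⟩ := hvmem
        refine ⟨kk, hkkK, by simpa using hkk0, fun _ => ?_⟩
        rw [hkkv, v.map_div]
      · exact ⟨1, K.one_mem, one_ne_zero, fun h => absurd h hi⟩
    choose k hkK hk0 hkv using hex
    have hvk : ∀ i, v (k i) ≠ 0 := fun i => by simpa [Valuation.zero_iff] using hk0 i
    set d : Fin m → F := fun i => b i / (k i * b i₀) with hd
    set e : Fin m → F := fun i => c i * k i / c i₀ with he
    have hdL : ∀ i, d i ∈ L := fun i => L.div_mem (hbL i) (L.mul_mem (hKL (hkK i)) (hbL i₀))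
    have heK' : ∀ i, e i ∈ K' := fun i => K'.div_mem (K'.mul_mem (hc i) (hKK' (hkK i))) (hc i₀)
    have hvd : ∀ i ∈ S, v (d i) = 1 := by
      intro i hi
      have hvbi : v (b i) ≠ 0 := by simpa [Valuation.zero_iff] using (hbc0 i hi).1
      show v (b i / (k i * b i₀)) = 1
      rw [v.map_div, map_mul, hkv i hi, div_mul_cancel₀ _ hvbi₀, div_self hvbi]
    have hid : ∀ i ∈ S, c i * b i = (c i₀ * b i₀) * (e i * d i) := by
      intro i hi
      show c i * b i = (c i₀ * b i₀) * ((c i * k i / c i₀) * (b i / (k i * b i₀)))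
      field_simp [hci₀, hbi₀, hk0 i]
    have hvde : ∀ i ∈ S, v (e i * d i) = 1 := by
      intro i hi
      have h1 := (hmemS i hi).symm.trans (congrArg v (hid i hi))
      rw [map_mul, hmemS i₀ hi₀S] at h1
      exact (mul_left_cancel₀ hγ0 ((mul_one γ).trans h1)).symm
    have hve : ∀ i ∈ S, v (e i) = 1 := by
      intro i hi
      have h1 := hvde i hi
      rw [map_mul, hvd i hi, mul_one] at h1
      exact h1
    -- enumerate S
    set p := S.card with hp
    set σ : Fin p → Fin m := fun j => ((S.equivFin.symm j) : Fin m) with hσ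
    have hσS : ∀ j, σ j ∈ S := fun j => (S.equivFin.symm j).2
    have hsum_equiv : ∀ g : Fin m → F, ∑ i ∈ S, g i = ∑ j, g (σ j) := by
      intro g
      rw [← Finset.sum_coe_sort S g]
      exact (Equiv.sum_comp S.equivFin.symm (fun x : {x // x ∈ S} => g (x : Fin m))).symm
    set dO : Fin p → v.valuationSubring := fun j => ⟨d (σ j), le_of_eq (hvd (σ j) (hσS j))⟩
      with hdO
    set eO : Fin p → v.valuationSubring := fun j => ⟨e (σ j), le_of_eq (hve (σ j) (hσS j))⟩
      with heO
    set D : Fin p → ResField v := fun j => IsLocalRing.residue _ (dO j) with hD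
    have hDL : ∀ j, D j ∈ ResidueSet v (L : Set F) := fun j => ⟨dO j, hdL (σ j), rfl⟩
    -- Claim 1 : residues of the d's are linearly independent over k(K)
    have claim1 : LinIndepOver (ResidueSet v (K : Set F)) D := by
      intro a ha hsum0
      by_contra hne
      push_neg at hne
      obtain ⟨j, haj⟩ := hne
      choose α hαK hαres using ha
      have hvαj : v (α j : F) = 1 := by
        rcases lt_or_eq_of_le ((α j).2 : v ((α j : F)) ≤ 1) with hlt | heq
        · exact absurd ((hαres j).symm.trans ((residue_eq_zero_iff_val (α j)).2 hlt)) haj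
        · exact heq
      set W : v.valuationSubring := ∑ j', α j' * dO j' with hW
      have hresW : IsLocalRing.residue _ W = 0 := by
        have h2 : IsLocalRing.residue _ W = ∑ j', a j' * D j' := by
          rw [hW, map_sum]
          exact Finset.sum_congr rfl fun j' _ => by simp [map_mul, hαres j', hD]
        rw [h2, hsum0]
      have hWlt : v (W : F) < 1 := (residue_eq_zero_iff_val W).1 hresW
      set c' : Fin m → F := fun i =>
        if h : i ∈ S then (α (S.equivFin ⟨i, h⟩) : F) / k i else 0 with hc'
      have hc'K : ∀ i, c' i ∈ (K : Set F) := by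
        intro i
        show c' i ∈ K
        rw [hc']
        dsimp only
        split
        · exact K.div_mem (hαK _) (hkK i)
        · exact K.zero_mem
      have hc'σ : ∀ j', c' (σ j') = (α j' : F) / k (σ j') := by
        intro j'
        rw [hc']
        dsimp only
        rw [dif_pos (hσS j')]
        congr 2
        have h2 : (⟨σ j', hσS j'⟩ : {x // x ∈ S}) = S.equivFin.symm j' := Subtype.ext rfl
        rw [h2, Equiv.apply_symm_apply]
      have hcoe : (W : F) = ∑ j', (α j' : F) * d (σ j') := by
        rw [hW]
        push_cast
        rfl
      have hkey : (W : F) * b i₀ = ∑ i, c' i * b i := by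
        have h1 : ∑ i, c' i * b i = ∑ i ∈ S, c' i * b i := by
          refine (Finset.sum_subset (Finset.subset_univ S) fun i _ hiS => ?_).symm
          rw [hc']
          dsimp only
          rw [dif_neg hiS, zero_mul]
        rw [h1, hsum_equiv (fun i => c' i * b i), hcoe, Finset.sum_mul]
        refine Finset.sum_congr rfl fun j' _ => ?_
        rw [hc'σ j']
        show (α j' : F) * (b (σ j') / (k (σ j') * b i₀)) * b i₀
          = (α j' : F) / k (σ j') * b (σ j')
        field_simp
      have hVI := (valIndep_iff v (K : Set F) b).1 hb c' hc'K
      have hterm : v (c' (σ j) * b (σ j)) = v (b i₀) := by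
        have hFid : c' (σ j) * b (σ j) = (α j : F) * d (σ j) * b i₀ := by
          rw [hc'σ j]
          show (α j : F) / k (σ j) * b (σ j) = (α j : F) * (b (σ j) / (k (σ j) * b i₀)) * b i₀
          field_simp [hbi₀, hk0 (σ j)]
        rw [hFid, map_mul, map_mul, hvαj, one_mul, hvd (σ j) (hσS j), one_mul]
      have hge : v (b i₀) ≤ v (W : F) * v (b i₀) := by
        calc v (b i₀) = v (c' (σ j) * b (σ j)) := hterm.symm
          _ ≤ VSup (fun i => v (c' i * b i)) := le_vsup (fun i => v (c' i * b i)) (σ j)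
          _ = v (∑ i, c' i * b i) := hVI.symm
          _ = v ((W : F) * b i₀) := by rw [hkey]
          _ = v (W : F) * v (b i₀) := map_mul v _ _
      exact absurd hWlt (not_lt.2 (one_le_of_le_mul hvbi₀ hge))
    have claim2 := hres p D hDL claim1
    -- final contradiction
    have hSlt : v (∑ i ∈ S, c i * b i) < γ := by
      have hrest : v (∑ i ∈ Finset.univ.filter (fun i => ¬ v (c i * b i) = γ), c i * b i)
          < γ := by
        refine v.map_sum_lt hγ0 fun i hi => ?_
        rw [Finset.mem_filter] at hi
        exact lt_of_le_of_ne ((le_vsup (fun i => v (c i * b i)) i).trans_eq hγdef.symm) hi.2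
      have hsplit : ∑ i ∈ S, c i * b i
          = (∑ i, c i * b i)
            - ∑ i ∈ Finset.univ.filter (fun i => ¬ v (c i * b i) = γ), c i * b i := by
        rw [eq_sub_iff_add_eq, hSdef, Finset.sum_filter_add_sum_filter_not]
      rw [hsplit]
      exact lt_of_le_of_lt (v.map_sub _ _) (max_lt hlt' hrest)
    set W2 : v.valuationSubring := ∑ j', eO j' * dO j' with hW2
    have hcoe2 : (W2 : F) = ∑ j', e (σ j') * d (σ j') := by
      rw [hW2]
      push_cast
      rfl
    have hid2 : ∑ i ∈ S, c i * b i = (c i₀ * b i₀) * (W2 : F) := by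
      rw [hcoe2, Finset.mul_sum, hsum_equiv (fun i => c i * b i)]
      exact Finset.sum_congr rfl fun j' _ => hid (σ j') (hσS j')
    have hW2lt : v (W2 : F) < 1 := by
      have h1 := hSlt
      rw [hid2, map_mul, hmemS i₀ hi₀S] at h1
      exact lt_one_of_mul_lt hγ0 h1
    have hres2 : IsLocalRing.residue _ W2 = 0 := (residue_eq_zero_iff_val W2).2 hW2lt
    have hzero : ∑ j', IsLocalRing.residue _ (eO j') * D j' = 0 := by
      rw [← hres2, hW2, map_sum]
      exact Finset.sum_congr rfl fun j' _ => by simp [map_mul, hD]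
    have happ := claim2 (fun j' => IsLocalRing.residue _ (eO j'))
      (fun j' => ⟨eO j', heK' (σ j'), rfl⟩) hzero (S.equivFin ⟨i₀, hi₀S⟩)
    have hlt1 : v (e (σ (S.equivFin ⟨i₀, hi₀S⟩))) < 1 :=
      (residue_eq_zero_iff_val _).1 happ
    rw [hve _ (hσS _)] at hlt1
    exact lt_irrefl 1 hlt1

end Aux13


namespace Aux13

lemma spanOver_eq_singleton_zero {E s : Set F} (hs : ∀ x ∈ s, x = (0 : F)) :
    SpanOver E s = {0} := by
  ext y
  constructor
  · rintro ⟨n, c, t, hc, ht, rfl⟩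
    simp only [Set.mem_singleton_iff]
    exact Finset.sum_eq_zero fun i _ => by rw [hs (t i) (ht i), mul_zero]
  · rintro hy
    rw [Set.mem_singleton_iff] at hy
    rw [hy]
    exact zero_mem_spanOver E s

lemma extract (v : Valuation F Γ₀) (E : Subfield F) :
    ∀ (m : ℕ) (b : Fin m → F), ValIndep v (E : Set F) b →
      ∀ (nn : ℕ) (a : Fin nn → F), (∀ i, a i ∈ SpanOver (E : Set F) (Set.range b)) →
        ∃ (m' : ℕ) (b' : Fin m' → F), ValIndep v (E : Set F) b' ∧
          (∀ j, b' j ≠ 0) ∧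
          SpanOver (E : Set F) (Set.range b') = SpanOver (E : Set F) (Set.range a) := by
  intro m
  induction m with
  | zero =>
    intro b _ nn a ha
    refine ⟨0, Fin.elim0, valIndep_fin_zero v _ _, fun j => j.elim0, ?_⟩
    have haz : ∀ i, a i = 0 := by
      intro i
      obtain ⟨C, hC, hCa⟩ := (mem_spanOver_range_iff E b (a i)).1 (ha i)
      simpa using hCa
    rw [spanOver_eq_singleton_zero (by simp), spanOver_eq_singleton_zero (by
      rintro x ⟨i, rfl⟩; exact haz i)]
  | succ mm ih =>
    intro b hbVI nn a ha
    classical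
    by_cases haz : ∀ i, a i = 0
    · refine ⟨0, Fin.elim0, valIndep_fin_zero v _ _, fun j => j.elim0, ?_⟩
      rw [spanOver_eq_singleton_zero (by simp), spanOver_eq_singleton_zero (by
        rintro x ⟨i, rfl⟩; exact haz i)]
    · push_neg at haz
      obtain ⟨i₀, hai₀⟩ := haz
      obtain ⟨C, hC, hCu⟩ := (mem_spanOver_range_iff E b (a i₀)).1 (ha i₀)
      have hvu : v (a i₀) = VSup (fun i => v (C i * b i)) := by
        rw [hCu]; exact (valIndep_iff v _ b).1 hbVI C hC
      obtain ⟨i₁, hi₁⟩ := exists_vsup (Nat.succ_ne_zero mm) (fun i => v (C i * b i))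
      have hvu1 : v (a i₀) = v (C i₁ * b i₁) := hvu.trans hi₁
      have hu0 : v (a i₀) ≠ 0 := by simpa [Valuation.zero_iff] using hai₀
      have hC1 : C i₁ ≠ 0 := fun h => hu0 (by rw [hvu1, h, zero_mul, map_zero])
      -- the smaller ambient family
      set b'' : Fin mm → F := fun j => b (i₁.succAbove j) with hb''
      have hb''VI : ValIndep v (E : Set F) b'' := by
        rw [valIndep_iff]; intro cc hcc
        set ccc : Fin (mm + 1) → F := i₁.insertNth 0 cc with hccc
        have hcccE : ∀ i, ccc i ∈ (E : Set F) := by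
          intro i
          rcases eq_or_ne i i₁ with rfl | hne
          · rw [hccc, Fin.insertNth_apply_same]; exact E.zero_mem
          · obtain ⟨j, rfl⟩ := Fin.exists_succAbove_eq hne
            rw [hccc, Fin.insertNth_apply_succAbove]; exact hcc j
        have h1 := (valIndep_iff v _ b).1 hbVI ccc hcccE
        have h2 : ∑ i, ccc i * b i = ∑ j, cc j * b'' j := by
          rw [Fin.sum_univ_succAbove (fun i => ccc i * b i) i₁]
          rw [hccc]
          simp [Fin.insertNth_apply_same, Fin.insertNth_apply_succAbove]
          rfl
        have h3 : VSup (fun i => v (ccc i * b i))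
            = VSup (fun j => v (cc j * b'' j)) := by
          rw [vsup_succAbove (fun i => v (ccc i * b i)) i₁]
          have hz : v (ccc i₁ * b i₁) = 0 := by
            rw [hccc, Fin.insertNth_apply_same, zero_mul, map_zero]
          rw [hz, sup_comm, sup_eq_left.2 zero_le']
          congr 1
          funext j
          rw [hccc, Fin.insertNth_apply_succAbove]
        rw [← h2, ← h3, h1]
      -- corrected generators
      choose Dm hDm hDa using fun jj => (mem_spanOver_range_iff E b (a jj)).1 (ha jj)
      set ecoef : Fin nn → F := fun jj => Dm jj i₁ / C i₁ with hecoef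
      have hecoefE : ∀ jj, ecoef jj ∈ E := fun jj => E.div_mem (hDm jj i₁) (hC i₁)
      set a' : Fin nn → F := fun jj => a jj - ecoef jj * a i₀ with ha'
      have ha'mem : ∀ jj, a' jj ∈ SpanOver (E : Set F) (Set.range b'') := by
        intro jj
        rw [mem_spanOver_range_iff]
        refine ⟨fun j => Dm jj (i₁.succAbove j) - ecoef jj * C (i₁.succAbove j),
          fun j => E.sub_mem (hDm jj _) (E.mul_mem (hecoefE jj) (hC _)), ?_⟩
        have expand : a' jj = ∑ i, (Dm jj i - ecoef jj * C i) * b i := by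
          rw [ha']
          dsimp only
          rw [hDa jj, hCu, Finset.mul_sum, ← Finset.sum_sub_distrib]
          exact Finset.sum_congr rfl fun i _ => by ring
        rw [expand, Fin.sum_univ_succAbove (fun i => (Dm jj i - ecoef jj * C i) * b i) i₁]
        have hzc : Dm jj i₁ - ecoef jj * C i₁ = 0 := by
          rw [hecoef]
          dsimp only
          rw [div_mul_cancel₀ _ hC1, sub_self]
        rw [hzc, zero_mul, zero_add]
      obtain ⟨m', b', hb'VI, hb'0, hb'span⟩ := ih b'' hb''VI nn a' ha'mem
      -- the span of b' sits inside the span of b''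
      have hspan_b'' : SpanOver (E : Set F) (Set.range b')
          ⊆ SpanOver (E : Set F) (Set.range b'') := by
        rw [hb'span]
        exact spanOver_le E (by rintro y ⟨jj, rfl⟩; exact ha'mem jj)
      -- the dominance condition
      have H : ∀ cc : F, cc ∈ E → ∀ w ∈ SpanOver (E : Set F) (Set.range b'),
          v cc * v (a i₀) ≤ v (cc * a i₀ + w) := by
        intro cc hccE w hw
        obtain ⟨W, hWE, hWeq⟩ := (mem_spanOver_range_iff E b'' w).1 (hspan_b'' hw)
        set G : Fin (mm + 1) → F :=
          i₁.insertNth (cc * C i₁) (fun j => cc * C (i₁.succAbove j) + W j) with hG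
        have hGE : ∀ i, G i ∈ (E : Set F) := by
          intro i
          rcases eq_or_ne i i₁ with rfl | hne
          · rw [hG, Fin.insertNth_apply_same]; exact E.mul_mem hccE (hC _)
          · obtain ⟨j, rfl⟩ := Fin.exists_succAbove_eq hne
            rw [hG, Fin.insertNth_apply_succAbove]
            exact E.add_mem (E.mul_mem hccE (hC _)) (hWE j)
        have hGsum : cc * a i₀ + w = ∑ i, G i * b i := by
          rw [Fin.sum_univ_succAbove (fun i => G i * b i) i₁, hG]
          simp only [Fin.insertNth_apply_same, Fin.insertNth_apply_succAbove]
          rw [hWeq, hCu, Finset.mul_sum,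
            Fin.sum_univ_succAbove (fun i => cc * (C i * b i)) i₁,
            Finset.sum_congr rfl (fun j (_ : j ∈ Finset.univ) =>
              add_mul (cc * C (i₁.succAbove j)) (W j) (b (i₁.succAbove j))),
            Finset.sum_add_distrib]
          rw [← mul_assoc]
          rw [add_assoc]
          congr 1
          congr 1
          exact Finset.sum_congr rfl fun j _ => by ring
        have h1 := (valIndep_iff v _ b).1 hbVI G hGE
        rw [hGsum, h1]
        calc v cc * v (a i₀) = v cc * v (C i₁ * b i₁) := by rw [hvu1]
          _ = v (G i₁ * b i₁) := by
              rw [hG, Fin.insertNth_apply_same, ← map_mul, mul_assoc]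
          _ ≤ VSup (fun i => v (G i * b i)) := le_vsup (fun i => v (G i * b i)) i₁
      -- assemble the final family
      refine ⟨m' + 1, Fin.cons (a i₀) b', valIndep_cons E hb'VI H, ?_, ?_⟩
      · intro j
        refine Fin.cases ?_ ?_ j
        · rw [Fin.cons_zero]; exact hai₀
        · intro jj; rw [Fin.cons_succ]; exact hb'0 jj
      · have hrange : Set.range (Fin.cons (a i₀) b' : Fin (m' + 1) → F)
            = {a i₀} ∪ Set.range b' := Fin.range_cons _ _
        apply Set.Subset.antisymm
        · refine spanOver_le E ?_
          rw [hrange]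
          rintro y (hy | ⟨jj, rfl⟩)
          · rw [Set.mem_singleton_iff] at hy
            rw [hy]
            exact mem_spanOver_of_mem E.one_mem (Set.mem_range_self i₀)
          · have h1 : b' jj ∈ SpanOver (E : Set F) (Set.range a') := by
              rw [← hb'span]
              exact mem_spanOver_of_mem E.one_mem (Set.mem_range_self jj)
            have h2 : SpanOver (E : Set F) (Set.range a')
                ⊆ SpanOver (E : Set F) (Set.range a) := by
              refine spanOver_le E ?_
              rintro y ⟨jj', rfl⟩
              have : a' jj' = a jj' + (-(ecoef jj')) * a i₀ := by rw [ha']; ring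
              rw [this]
              exact add_mem_spanOver
                (mem_spanOver_of_mem E.one_mem (Set.mem_range_self jj'))
                (smul_mem_spanOver E (E.neg_mem (hecoefE jj'))
                  (mem_spanOver_of_mem E.one_mem (Set.mem_range_self i₀)))
            exact h2 h1
        · refine spanOver_le E ?_
          rintro y ⟨jj, rfl⟩
          have h1 : a' jj ∈ SpanOver (E : Set F)
              (Set.range (Fin.cons (a i₀) b' : Fin (m' + 1) → F)) := by
            have : a' jj ∈ SpanOver (E : Set F) (Set.range b') := by
              rw [hb'span]
              exact mem_spanOver_of_mem E.one_mem (Set.mem_range_self jj)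
            exact spanOver_mono (by rw [hrange]; exact Set.subset_union_right) this
          have h2 : a jj = a' jj + ecoef jj * a i₀ := by rw [ha']; ring
          rw [h2]
          refine add_mem_spanOver h1 (smul_mem_spanOver E (hecoefE jj)
            (mem_spanOver_of_mem E.one_mem ?_))
          rw [hrange]
          exact Set.mem_union_left _ rfl
      
end Aux13


namespace Aux13

lemma mul_mem_spanOverL (K' L : Subfield F) {x y : F}
    (hx : x ∈ SpanOver (K' : Set F) (L : Set F))
    (hy : y ∈ SpanOver (K' : Set F) (L : Set F)) :
    x * y ∈ SpanOver (K' : Set F) (L : Set F) := by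
  obtain ⟨n, c, t, hc, ht, rfl⟩ := hx
  obtain ⟨m, d, u, hd, hu, rfl⟩ := hy
  rw [Finset.sum_mul]
  have : ∀ i : Fin n, c i * t i * (∑ j, d j * u j) = c i * (t i * ∑ j, d j * u j) :=
    fun i => mul_assoc _ _ _
  rw [Finset.sum_congr rfl fun i _ => this i]
  refine sum_mem_spanOver K' hc fun i => ?_
  rw [Finset.mul_sum]
  refine ⟨m, d, fun j => t i * u j, hd, fun j => L.mul_mem (ht i) (hu j), ?_⟩
  exact Finset.sum_congr rfl fun j _ => by ring

lemma one_mem_spanOverL (K' L : Subfield F) :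
    (1 : F) ∈ SpanOver (K' : Set F) (L : Set F) :=
  mem_spanOver_of_mem K'.one_mem L.one_mem

lemma prod_mem_spanOverL (K' L : Subfield F) {ι : Type*} (s : Finset ι) (f : ι → F)
    (hf : ∀ i ∈ s, f i ∈ SpanOver (K' : Set F) (L : Set F)) :
    (∏ i ∈ s, f i) ∈ SpanOver (K' : Set F) (L : Set F) :=
  Finset.prod_induction f _ (fun _ _ => mul_mem_spanOverL K' L)
    (one_mem_spanOverL K' L) hf

/-- The subfield of fractions of the `K'`-span of `L`. -/
def fracField (K' L : Subfield F) : Subfield F where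
  carrier := {x | ∃ p ∈ SpanOver (K' : Set F) (L : Set F),
    ∃ q ∈ SpanOver (K' : Set F) (L : Set F), q ≠ 0 ∧ x * q = p}
  one_mem' := ⟨1, one_mem_spanOverL K' L, 1, one_mem_spanOverL K' L, one_ne_zero, one_mul 1⟩
  zero_mem' := ⟨0, zero_mem_spanOver _ _, 1, one_mem_spanOverL K' L, one_ne_zero, zero_mul 1⟩
  mul_mem' := by
    rintro x y ⟨p₁, hp₁, q₁, hq₁, hq₁0, hx⟩ ⟨p₂, hp₂, q₂, hq₂, hq₂0, hy⟩
    refine ⟨p₁ * p₂, mul_mem_spanOverL K' L hp₁ hp₂,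
      q₁ * q₂, mul_mem_spanOverL K' L hq₁ hq₂, mul_ne_zero hq₁0 hq₂0, ?_⟩
    rw [← hx, ← hy]; ring
  add_mem' := by
    rintro x y ⟨p₁, hp₁, q₁, hq₁, hq₁0, hx⟩ ⟨p₂, hp₂, q₂, hq₂, hq₂0, hy⟩
    refine ⟨p₁ * q₂ + p₂ * q₁,
      add_mem_spanOver (mul_mem_spanOverL K' L hp₁ hq₂) (mul_mem_spanOverL K' L hp₂ hq₁),
      q₁ * q₂, mul_mem_spanOverL K' L hq₁ hq₂, mul_ne_zero hq₁0 hq₂0, ?_⟩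
    rw [← hx, ← hy]; ring
  neg_mem' := by
    rintro x ⟨p, hp, q, hq, hq0, hx⟩
    refine ⟨(-1) * p, smul_mem_spanOver K' (K'.neg_mem K'.one_mem) hp, q, hq, hq0, ?_⟩
    rw [← hx]; ring
  inv_mem' := by
    rintro x ⟨p, hp, q, hq, hq0, hx⟩
    rcases eq_or_ne x 0 with rfl | hx0
    · rw [inv_zero]
      exact ⟨0, zero_mem_spanOver _ _, 1, one_mem_spanOverL K' L, one_ne_zero, zero_mul 1⟩
    · have hp0 : p ≠ 0 := by
        rw [← hx]; exact mul_ne_zero hx0 hq0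
      refine ⟨q, hq, p, hp, hp0, ?_⟩
      rw [← hx]
      field_simp
  
lemma sup_le_fracField (K' L : Subfield F) : L ⊔ K' ≤ fracField K' L := by
  refine sup_le ?_ ?_
  · intro l hl
    exact ⟨l, mem_spanOver_of_mem K'.one_mem hl, 1, one_mem_spanOverL K' L,
      one_ne_zero, mul_one l⟩
  · intro c hc
    refine ⟨c, ⟨1, fun _ => c, fun _ => 1, fun _ => hc, fun _ => L.one_mem, by simp⟩,
      1, one_mem_spanOverL K' L, one_ne_zero, mul_one c⟩

lemma cover (K' L : Subfield F) : ∀ (n : ℕ) (a : Fin n → F),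
    (∀ i, a i ∈ SpanOver (K' : Set F) (L : Set F)) →
    ∃ (N : ℕ) (t : Fin N → F), (∀ j, t j ∈ L) ∧
      ∀ i, a i ∈ SpanOver (K' : Set F) (Set.range t) := by
  intro n
  induction n with
  | zero => exact fun a _ => ⟨0, Fin.elim0, fun j => j.elim0, fun i => i.elim0⟩
  | succ nn ih =>
    intro a ha
    obtain ⟨N, t, htL, htmem⟩ := ih (fun i => a i.succ) (fun i => ha i.succ)
    obtain ⟨n0, c0, t0, hc0, ht0, heq0⟩ := ha 0
    refine ⟨N + n0, Fin.append t t0, ?_, ?_⟩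
    · intro j
      refine Fin.addCases (fun j => ?_) (fun j => ?_) j
      · rw [Fin.append_left]; exact htL j
      · rw [Fin.append_right]; exact ht0 j
    · intro i
      refine Fin.cases ?_ ?_ i
      · rw [heq0]
        refine sum_mem_spanOver K' hc0 fun j => mem_spanOver_of_mem K'.one_mem ?_
        exact ⟨Fin.natAdd N j, Fin.append_right t t0 j⟩
      · intro ii
        refine spanOver_mono ?_ (htmem ii)
        rintro y ⟨j, rfl⟩
        exact ⟨Fin.castAdd n0 j, Fin.append_left t t0 j⟩

lemma spanOver_subset_subfield {K L : Subfield F} (hKL : K ≤ L) {s : Set F}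
    (hs : s ⊆ (L : Set F)) : SpanOver (K : Set F) s ⊆ (L : Set F) := by
  rintro y ⟨n, c, t, hc, ht, rfl⟩
  exact Subfield.sum_mem L fun i _ => L.mul_mem (hKL (hc i)) (hs (ht i))

lemma spanOver_coeff_mono {K K' : Subfield F} (hKK' : K ≤ K') (s : Set F) :
    SpanOver (K : Set F) s ⊆ SpanOver (K' : Set F) s := by
  rintro y ⟨n, c, t, hc, ht, rfl⟩
  exact ⟨n, c, t, fun i => hKK' (hc i), ht, rfl⟩

lemma mem_spanOver_scale (E : Set F) {n : ℕ} (g : Fin n → F) {s : F} (hs : s ≠ 0) (z : F) :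
    z ∈ SpanOver E (Set.range fun i => g i * s⁻¹) ↔ z * s ∈ SpanOver E (Set.range g) := by
  constructor
  · rintro ⟨nn, c, t, hc, ht, rfl⟩
    choose f hf using fun j => Set.mem_range.1 (ht j)
    refine ⟨nn, c, fun j => g (f j), hc, fun j => Set.mem_range_self _, ?_⟩
    rw [Finset.sum_mul]
    refine Finset.sum_congr rfl fun j _ => ?_
    rw [← hf j]
    show c j * (g (f j) * s⁻¹) * s = c j * g (f j)
    field_simp
  · intro h
    obtain ⟨nn, c, t, hc, ht, heq⟩ := h
    choose f hf using fun j => Set.mem_range.1 (ht j)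
    refine ⟨nn, c, fun j => g (f j) * s⁻¹, hc, fun j => ⟨f j, rfl⟩, ?_⟩
    have hz : z = (z * s) * s⁻¹ := by field_simp
    rw [hz, heq, Finset.sum_mul]
    refine Finset.sum_congr rfl fun j _ => ?_
    show c j * t j * s⁻¹ = c j * (g (f j) * s⁻¹)
    rw [hf j]; ring

end Aux13

/-- Under the hypotheses of valuative disjointness, the extension `LK'/K'` of
the compositum over `K'` is vs-defectless. -/
theorem compositum_vsDefectless
    (F Γ₀ : Type*) [Field F] [LinearOrderedCommGroupWithZero Γ₀]
    (v : Valuation F Γ₀)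
    (K K' L : Subfield F) (hKK' : K ≤ K') (hKL : K ≤ L)
    (hdef : VsDefectless v (K : Set F) (L : Set F))
    (hΓ : ValueGroupSet v (L : Set F) ∩ ValueGroupSet v (K' : Set F)
        = ValueGroupSet v (K : Set F))
    (hres : ∀ (n : ℕ) (x : Fin n → ResField v),
        (∀ i, x i ∈ ResidueSet v (L : Set F)) →
        LinIndepOver (ResidueSet v (K : Set F)) x →
        LinIndepOver (ResidueSet v (K' : Set F)) x) :
    VsDefectless v (K' : Set F) ((L ⊔ K' : Subfield F) : Set F) := by
  classical
  intro n x hx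
  -- every element of `L ⊔ K'` is a quotient of elements of the `K'`-span of `L`
  have hxQ : ∀ i, ∃ p ∈ SpanOver (K' : Set F) (L : Set F),
      ∃ q ∈ SpanOver (K' : Set F) (L : Set F), q ≠ 0 ∧ x i * q = p :=
    fun i => Aux13.sup_le_fracField K' L (hx i)
  choose p hp q hq hq0 hxq using hxQ
  -- the common denominator
  set s : F := ∏ i, q i with hs
  have hsP : s ∈ SpanOver (K' : Set F) (L : Set F) :=
    Aux13.prod_mem_spanOverL K' L Finset.univ q fun i _ => hq i
  have hs0 : s ≠ 0 := Finset.prod_ne_zero_iff.2 fun i _ => hq0 i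
  set a : Fin n → F := fun i => p i * ∏ j ∈ Finset.univ.erase i, q j with ha
  have haP : ∀ i, a i ∈ SpanOver (K' : Set F) (L : Set F) := fun i =>
    Aux13.mul_mem_spanOverL K' L (hp i)
      (Aux13.prod_mem_spanOverL K' L _ q fun j _ => hq j)
  have hxa : ∀ i, x i * s = a i := by
    intro i
    rw [hs, ha]
    dsimp only
    rw [← Finset.mul_prod_erase Finset.univ q (Finset.mem_univ i), ← mul_assoc, hxq i]
  -- a finite family in `L` whose `K'`-span contains all the `a i`
  obtain ⟨N, t, htL, htmem⟩ := Aux13.cover K' L n a haP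
  -- a `K`-valuation independent basis for the `K`-span of `t`
  obtain ⟨mB, bB, hBVI, hBLI, hBspan⟩ := hdef N t (fun j => htL j)
  have hbBL : ∀ i, bB i ∈ L := by
    intro i
    have h1 : bB i ∈ SpanOver (K : Set F) (Set.range t) := by
      rw [← hBspan]
      exact Aux13.mem_spanOver_of_mem K.one_mem (Set.mem_range_self i)
    exact Aux13.spanOver_subset_subfield hKL
      (by rintro y ⟨j, rfl⟩; exact htL j) h1
  -- transfer valuation independence from `K` to `K'`
  have hBVI' : ValIndep v (K' : Set F) bB :=
    Aux13.transfer v K K' L hKK' hKL hΓ hres hbBL hBVI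
  -- all `a i` lie in the `K'`-span of `bB`
  have hamem : ∀ i, a i ∈ SpanOver (K' : Set F) (Set.range bB) := by
    intro i
    have h1 : Set.range t ⊆ SpanOver (K' : Set F) (Set.range bB) := by
      rintro y ⟨j, rfl⟩
      refine Aux13.spanOver_coeff_mono hKK' _ ?_
      rw [hBspan]
      exact Aux13.mem_spanOver_of_mem K.one_mem (Set.mem_range_self j)
    exact Aux13.spanOver_le K' h1 (htmem i)
  -- extract a `K'`-valuation independent basis for the span of the `a i`
  obtain ⟨m', b', hVI', hb'0, hspan'⟩ := Aux13.extract v K' mB bB hBVI' n a hamem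
  -- rescale by the common denominator
  refine ⟨m', fun j => b' j * s⁻¹, Aux13.ValIndep.scale hVI' s⁻¹, ?_, ?_⟩
  · exact Aux13.ValIndep.linIndepOver (Aux13.ValIndep.scale hVI' s⁻¹) fun j =>
      mul_ne_zero (hb'0 j) (inv_ne_zero hs0)
  · have hxeq : x = fun i => a i * s⁻¹ := by
      funext i
      rw [← hxa i]
      field_simp
    rw [hxeq]
    ext z
    rw [Aux13.mem_spanOver_scale _ b' hs0 z, Aux13.mem_spanOver_scale _ a hs0 z, hspan']
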